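/- With the sets T_n defined as above and T = ∪_n T_n, suppose White plays x-greedily and, whenever an x-greedy move into T exists, moves into T_i with minimal index i. Then from any position in T_n, the probability (over fair coin flips deciding who moves) that a terminal position is reached within the next n moves is at least 2^{−n}. Consequently, with probability 1, no position of T is visited infinitely often. -/

import Mathlib

open Finset

/-- A finite game graph: each non-terminal position has nonempty finite sets of
White and Black options; terminal positions carry a value 0 (Black win) or 1 (White win). -/
structure GameGraph (P : Type) [Fintype P] [DecidableEq P] where
  terminal : P → Bool
  tval : P → ℝ
  tval01 : ∀ p, terminal p = true → tval p = 0 ∨ tval p = 1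
  W : P → Finset P
  B : P → Finset P
  Wne : ∀ p, terminal p = false → (W p).Nonempty
  Bne : ∀ p, terminal p = false → (B p).Nonempty

variable {P : Type} [Fintype P] [DecidableEq P]

/-- The thresholds `α_n`, with base value 0 at non-terminal positions. -/
noncomputable def GameGraph.alpha (G : GameGraph P) : ℕ → P → ℝ
  | 0, p => if G.terminal p then G.tval p else 0
  | n+1, p =>
    if h : G.terminal p = true then G.tval p
    else ((G.W p).sup' (G.Wne p (by simpa using h)) (G.alpha n)
        + (G.B p).inf' (G.Bne p (by simpa using h)) (G.alpha n)) / 2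

/-- The thresholds `β_n`, with base value 1 at non-terminal positions. -/
noncomputable def GameGraph.beta (G : GameGraph P) : ℕ → P → ℝ
  | 0, p => if G.terminal p then G.tval p else 1
  | n+1, p =>
    if h : G.terminal p = true then G.tval p
    else ((G.W p).sup' (G.Wne p (by simpa using h)) (G.beta n)
        + (G.B p).inf' (G.Bne p (by simpa using h)) (G.beta n)) / 2

noncomputable def GameGraph.alphaLim (G : GameGraph P) (p : P) : ℝ := ⨆ n, G.alpha n p

noncomputable def GameGraph.betaLim (G : GameGraph P) (p : P) : ℝ := ⨅ n, G.beta n p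

/-- A Richman function: values in `[0,1]`, prescribed terminal values, and the
averaging equation at non-terminal positions. -/
def GameGraph.IsRichman (G : GameGraph P) (x : P → ℝ) : Prop :=
  (∀ p, 0 ≤ x p ∧ x p ≤ 1) ∧
  (∀ p, G.terminal p = true → x p = G.tval p) ∧
  (∀ p, ∀ h : G.terminal p = false,
    x p = ((G.W p).sup' (G.Wne p h) x + (G.B p).inf' (G.Bne p h) x) / 2)

/-- The sets `T_n`: `T_0` is the set of terminal positions, and `T_{n+1}` consists
of positions in `T_n`, positions with an `x`-greedy White option in `T_n`, and
positions all of whose Black options lie in `T_n`. -/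
def GameGraph.Tset (G : GameGraph P) (x : P → ℝ) : ℕ → Set P
  | 0 => {p | G.terminal p = true}
  | n+1 => G.Tset x n ∪
      {p | ∃ h : G.terminal p = false, ∃ w ∈ G.W p,
        w ∈ G.Tset x n ∧ x w = (G.W p).sup' (G.Wne p h) x} ∪
      {p | ∀ b ∈ G.B p, b ∈ G.Tset x n}

open MeasureTheory ProbabilityTheory

namespace Transience14


open Classical in
/-- count of `l < n` satisfying `Q`. -/
noncomputable def cnt (Q : ℕ → Prop) (n : ℕ) : ℕ := ((Finset.range n).filter Q).card

lemma cnt_mono (Q : ℕ → Prop) {a b : ℕ} (h : a ≤ b) : cnt Q a ≤ cnt Q b := by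
  classical
  exact Finset.card_le_card (Finset.filter_subset_filter _ (Finset.range_subset_range.mpr h))

open Classical in
lemma cnt_succ (Q : ℕ → Prop) (n : ℕ) :
    cnt Q (n + 1) = cnt Q n + (if Q n then 1 else 0) := by
  rw [cnt, Finset.range_add_one, Finset.filter_insert]
  split
  · rw [Finset.card_insert_of_notMem (by simp)]; rfl
  · simp [cnt]

lemma cnt_lt (Q : ℕ → Prop) {m n : ℕ} (hm : Q m) (h : m < n) :
    cnt Q m < cnt Q n :=
  calc cnt Q m < cnt Q (m + 1) := by rw [cnt_succ]; simp [hm]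
  _ ≤ cnt Q n := cnt_mono _ h

lemma exists_cnt_eq (Q : ℕ → Prop) {k M : ℕ} (h : k < cnt Q M) :
    ∃ m < M, Q m ∧ cnt Q m = k := by
  induction M with
  | zero => simp [cnt] at h
  | succ M ih =>
    by_cases h' : k < cnt Q M
    · obtain ⟨m, hm, hQ, hc⟩ := ih h'
      exact ⟨m, hm.trans (Nat.lt_succ_self M), hQ, hc⟩
    · have hQM : Q M := by
        by_contra hQM
        rw [cnt_succ, if_neg hQM] at h
        omega
    
      have hk : cnt Q M = k := by
        rw [cnt_succ, if_pos hQM] at h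
        omega
      exact ⟨M, Nat.lt_succ_self M, hQM, hk⟩

lemma cnt_congr {Q Q' : ℕ → Prop} (n : ℕ)
    (h : ∀ l < n, (Q l ↔ Q' l)) : cnt Q n = cnt Q' n := by
  classical
  unfold cnt
  congr 1
  exact Finset.filter_congr fun l hl => by
    simpa using h l (Finset.mem_range.mp hl)

variable {Ω : Type} [MeasurableSpace Ω] {μ : Measure Ω}

/-- cylinder set given by a finite coin prefix -/
def cyl (C : ℕ → Ω → Bool) (m : ℕ) (s : Fin m → Bool) : Set Ω :=
  {ω | ∀ i : Fin m, C i ω = s i}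

lemma measurableSet_cyl (C : ℕ → Ω → Bool) (hC : ∀ n, Measurable (C n))
    (m : ℕ) (s : Fin m → Bool) : MeasurableSet (cyl C m s) := by
  have : cyl C m s = ⋂ i : Fin m, (C i) ⁻¹' {s i} := by
    ext ω; simp [cyl, Set.mem_iInter, Set.mem_preimage]
  rw [this]
  exact MeasurableSet.iInter fun i => (hC i) (measurableSet_singleton _)

lemma meas_coin [IsProbabilityMeasure μ] (C : ℕ → Ω → Bool) (hC : ∀ n, Measurable (C n))
    (hCfair : ∀ n, μ (C n ⁻¹' {true}) = 1 / 2)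
    (n : ℕ) (b : Bool) : μ (C n ⁻¹' {b}) = 2⁻¹ := by
  cases b
  · have hcompl : C n ⁻¹' {false} = (C n ⁻¹' {true})ᶜ := by
      ext ω; cases h : C n ω <;> simp [h]
    rw [hcompl, prob_compl_eq_one_sub ((hC n) (measurableSet_singleton _)), hCfair]
    rw [one_div]
    refine ENNReal.sub_eq_of_eq_add (by simp) ?_
    rw [← two_mul, ENNReal.mul_inv_cancel (by norm_num) (by norm_num)]
  · rw [hCfair, one_div]

lemma meas_cyl [IsProbabilityMeasure μ] (C : ℕ → Ω → Bool) (hC : ∀ n, Measurable (C n))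
    (hind : iIndepFun C μ)
    (hCfair : ∀ n, μ (C n ⁻¹' {true}) = 1 / 2)
    (m : ℕ) (s : Fin m → Bool) : μ (cyl C m s) = 2⁻¹ ^ m := by
  classical
  set sets : ℕ → Set Bool := fun i => if h : i < m then {s ⟨i, h⟩} else Set.univ with hsets
  have hmeas : ∀ i ∈ Finset.range m, MeasurableSet (sets i) := by
    intro i _
    by_cases h : i < m <;> simp [hsets, h]
  have hEq : cyl C m s = ⋂ i ∈ Finset.range m, C i ⁻¹' sets i := by
    ext ω
    simp only [cyl, Set.mem_setOf_eq, Set.mem_iInter, Finset.mem_range, Set.mem_preimage]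
    constructor
    · intro h i hi; simp [hsets, hi, h ⟨i, hi⟩]
    · intro h i; have := h i i.2; simpa [hsets, i.2] using this
  rw [hEq, hind.measure_inter_preimage_eq_mul (Finset.range m) hmeas]
  have : ∀ i ∈ Finset.range m, μ (C i ⁻¹' sets i) = 2⁻¹ := by
    intro i hi
    rw [Finset.mem_range] at hi
    have : sets i = {s ⟨i, hi⟩} := by simp [hsets, hi]
    rw [this]
    exact meas_coin C hC hCfair i _
  rw [Finset.prod_congr rfl this]
  simp

lemma cyl_snoc (C : ℕ → Ω → Bool) (n : ℕ) (s : Fin n → Bool) (b : Bool) :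
    cyl C (n + 1) (Fin.snoc s b) = cyl C n s ∩ C n ⁻¹' {b} := by
  ext ω
  constructor
  · intro h
    refine ⟨fun i => ?_, ?_⟩
    · have := h i.castSucc
      rwa [Fin.snoc_castSucc, Fin.coe_castSucc] at this
    · have := h (Fin.last n)
      rwa [Fin.snoc_last, Fin.val_last] at this
  · rintro ⟨h1, h2⟩ i
    refine Fin.lastCases ?_ ?_ i
    · rw [Fin.snoc_last, Fin.val_last]; exact h2
    · intro i; rw [Fin.snoc_castSucc, Fin.coe_castSucc]; exact h1 i


def InT (G : GameGraph P) (x : P → ℝ) (p : P) : Prop := ∃ i, p ∈ G.Tset x i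

open Classical in
noncomputable def midx (G : GameGraph P) (x : P → ℝ) (p : P) : ℕ :=
  if h : InT G x p then Nat.find h else 0

lemma Tset_mono (G : GameGraph P) (x : P → ℝ) {i j : ℕ} (h : i ≤ j) :
    G.Tset x i ⊆ G.Tset x j := by
  induction h with
  | refl => exact subset_rfl
  | step _ ih => exact ih.trans (fun p hp => Or.inl (Or.inl hp))

lemma midx_mem {G : GameGraph P} {x : P → ℝ} {p : P} (h : InT G x p) :
    p ∈ G.Tset x (midx G x p) := by
  classical
  rw [midx, dif_pos h]
  exact Nat.find_spec h

lemma midx_le {G : GameGraph P} {x : P → ℝ} {p : P} {i : ℕ} (h : p ∈ G.Tset x i) :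
    midx G x p ≤ i := by
  classical
  rw [midx, dif_pos ⟨i, h⟩]
  exact Nat.find_min' _ h

lemma not_mem_of_lt_midx {G : GameGraph P} {x : P → ℝ} {p : P} {i : ℕ}
    (h : i < midx G x p) : p ∉ G.Tset x i :=
  fun hp => absurd (midx_le hp) (not_le.mpr h)

lemma midx_pos {G : GameGraph P} {x : P → ℝ} {p : P} (hin : InT G x p)
    (hnt : G.terminal p = false) : 1 ≤ midx G x p := by
  by_contra h
  have h0 : midx G x p = 0 := by omega
  have := midx_mem hin
  rw [h0] at this
  have : G.terminal p = true := this
  rw [hnt] at this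
  exact Bool.false_ne_true this

open Classical in
noncomputable def gcoin (G : GameGraph P) (x : P → ℝ) (p : P) : Bool :=
  if (∃ h : G.terminal p = false, ∃ w ∈ G.W p,
      w ∈ G.Tset x (midx G x p - 1) ∧ x w = (G.W p).sup' (G.Wne p h) x) then true else false




noncomputable def esc {P : Type} [Fintype P] [DecidableEq P] (G : GameGraph P) (x : P → ℝ)
    (f : ∀ n, (Fin n → Bool) → P) (m : ℕ) (s : Fin m → Bool) :
    (j : ℕ) → Fin (m + j) → Bool
  | 0 => s
  | j+1 => Fin.snoc (esc G x f m s j)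
      (gcoin G x (f (m + j) (esc G x f m s j)))




section Part2Defs

variable {P : Type} [Fintype P] [DecidableEq P] {Ω : Type}

def NkSet (Pos : ℕ → Ω → P) (p : P) (k : ℕ) : Set Ω :=
  {ω | ∃ m, Pos m ω = p ∧ cnt (fun l => Pos l ω = p) m = k}

def Qs (f : ∀ n, (Fin n → Bool) → P) (p : P) (ms : Σ m : ℕ, Fin m → Bool) (l : ℕ) : Prop :=
  ∃ h : l < ms.1, f l (fun i' => ms.2 ⟨i'.1, lt_of_lt_of_le i'.2 (le_of_lt h)⟩) = p

def condK (f : ∀ n, (Fin n → Bool) → P) (p : P) (k : ℕ) (ms : Σ m : ℕ, Fin m → Bool) : Prop :=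
  f ms.1 ms.2 = p ∧ cnt (Qs f p ms) ms.1 = k

open Classical in
def EK (C : ℕ → Ω → Bool) (f : ∀ n, (Fin n → Bool) → P) (p : P) (k : ℕ)
    (ms : Σ m : ℕ, Fin m → Bool) : Set Ω :=
  if condK f p k ms then cyl C ms.1 ms.2 else ∅

end Part2Defs

end Transience14

open Transience14

/-- in random-turn play where White plays `x`-greedily and, whenever
an `x`-greedy move into some `T_i` exists, moves into `T_i` with minimal index,
then from a starting position in `T_n` the probability of reaching a terminal
position within `n` moves is at least `2^{−n}`; consequently, almost surely no
non-terminal position of `T = ⋃ T_i` is visited infinitely often. -/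
theorem transience_of_T (G : GameGraph P) (x : P → ℝ)
    {Ω : Type} [MeasurableSpace Ω] (μ : Measure Ω) [IsProbabilityMeasure μ]
    (C : ℕ → Ω → Bool) (hCmeas : ∀ n, Measurable (C n))
    (hCindep : iIndepFun C μ)
    (hCfair : ∀ n, μ (C n ⁻¹' {true}) = 1 / 2)
    (Pos : ℕ → Ω → P)
    (hAdapted : ∀ n, ∃ f : (Fin n → Bool) → P, ∀ ω, Pos n ω = f fun i => C i ω)
    (habs : ∀ n ω, G.terminal (Pos n ω) = true → Pos (n + 1) ω = Pos n ω)
    (hWgreedy : ∀ n ω, ∀ h : G.terminal (Pos n ω) = false, C n ω = true →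
      Pos (n + 1) ω ∈ G.W (Pos n ω) ∧
      x (Pos (n + 1) ω) = (G.W (Pos n ω)).sup' (G.Wne _ h) x)
    (hWintoT : ∀ n ω, ∀ h : G.terminal (Pos n ω) = false, C n ω = true → ∀ i,
      (∃ w ∈ G.W (Pos n ω), w ∈ G.Tset x i ∧
        x w = (G.W (Pos n ω)).sup' (G.Wne _ h) x) →
      Pos (n + 1) ω ∈ G.Tset x i)
    (hBmove : ∀ n ω, G.terminal (Pos n ω) = false → C n ω = false →
      Pos (n + 1) ω ∈ G.B (Pos n ω)) :
    (∀ n : ℕ, ∀ p0 : P, (∀ ω, Pos 0 ω = p0) → p0 ∈ G.Tset x n →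
      ((2 : ENNReal))⁻¹ ^ n ≤ μ {ω | ∃ m ≤ n, G.terminal (Pos m ω) = true}) ∧
    μ {ω | ∃ p ∈ ⋃ i, G.Tset x i, G.terminal p = false ∧
        {n : ℕ | Pos n ω = p}.Infinite} = 0 := by
  classical
  choose f hf using hAdapted
  have hΩ : Nonempty Ω := by
    by_contra h
    have h1 : (Set.univ : Set Ω) = ∅ := Set.univ_eq_empty_iff.mpr (not_nonempty_iff.mp h)
    have h2 := measure_univ (μ := μ)
    rw [h1] at h2
    simp at h2
  -- cylinder facts
  have hcylmeas : ∀ m (s : Fin m → Bool), MeasurableSet (cyl C m s) :=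
    measurableSet_cyl C hCmeas
  have hcylμ : ∀ m (s : Fin m → Bool), μ (cyl C m s) = 2⁻¹ ^ m :=
    meas_cyl C hCmeas hCindep hCfair
  have hposcyl : ∀ m (s : Fin m → Bool) ω, ω ∈ cyl C m s → Pos m ω = f m s := by
    intro m s ω hω
    rw [hf m ω]
    congr 1
    funext i
    exact hω i
  -- one-step lemma
  have hstep : ∀ n ω, G.terminal (Pos n ω) = false → InT G x (Pos n ω) →
      C n ω = gcoin G x (Pos n ω) →
      Pos (n + 1) ω ∈ G.Tset x (midx G x (Pos n ω) - 1) := by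
    intro n ω hnt hin hc
    have h1 := midx_pos hin hnt
    obtain ⟨i, hi⟩ : ∃ i, midx G x (Pos n ω) = i + 1 :=
      ⟨midx G x (Pos n ω) - 1, by omega⟩
    have hmem : Pos n ω ∈ G.Tset x (i + 1) := by rw [← hi]; exact midx_mem hin
    have hnot : Pos n ω ∉ G.Tset x i := not_mem_of_lt_midx (by omega)
    have hi1 : midx G x (Pos n ω) - 1 = i := by omega
    by_cases hE : (∃ h : G.terminal (Pos n ω) = false, ∃ w ∈ G.W (Pos n ω),
        w ∈ G.Tset x (midx G x (Pos n ω) - 1) ∧ x w = (G.W (Pos n ω)).sup' (G.Wne _ h) x)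
    · have hcoin : gcoin G x (Pos n ω) = true := by rw [gcoin, if_pos hE]
      obtain ⟨h', w, hw, hwT, hgx⟩ := hE
      rw [hi1] at hwT
      have := hWintoT n ω hnt (hc.trans hcoin) i ⟨w, hw, hwT, hgx⟩
      rwa [hi1]
    · have hcoin : gcoin G x (Pos n ω) = false := by rw [gcoin, if_neg hE]
      have hB := hBmove n ω hnt (hc.trans hcoin)
      simp only [GameGraph.Tset, Set.mem_union] at hmem
      rcases hmem with (hmem | hmem) | hmem
      · exact absurd hmem hnot
      · exfalso
        obtain ⟨h', w, hw, hwT, hgx⟩ := hmem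
        exact hE ⟨h', w, hw, by rw [hi1]; exact hwT, hgx⟩
      · rw [hi1]
        exact hmem _ hB
  -- escape-cylinder monotonicity
  have hescsub : ∀ m (s : Fin m → Bool) (k j : ℕ), k ≤ j →
      cyl C (m + j) (esc G x f m s j) ⊆ cyl C (m + k) (esc G x f m s k) := by
    intro m s k j hkj
    have hesc1 : ∀ (j' : ℕ), cyl C (m + (j' + 1)) (esc G x f m s (j' + 1)) ⊆
        cyl C (m + j') (esc G x f m s j') := by
      intro j' ω hω
      have hω' : ω ∈ cyl C ((m + j') + 1) (Fin.snoc (esc G x f m s j')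
          (gcoin G x (f (m + j') (esc G x f m s j')))) := hω
      rw [cyl_snoc] at hω'
      exact hω'.1
    induction hkj with
    | refl => exact subset_rfl
    | @step j' h ih => exact (hesc1 j').trans ih
  -- one step along the escape path
  have hqpstep : ∀ m (s : Fin m → Bool) (j : ℕ),
      G.terminal (f (m + j) (esc G x f m s j)) = false →
      InT G x (f (m + j) (esc G x f m s j)) →
      f (m + (j + 1)) (esc G x f m s (j + 1)) ∈
        G.Tset x (midx G x (f (m + j) (esc G x f m s j)) - 1) := by
    intro m s j hnt hin
    have hne : (cyl C (m + (j + 1)) (esc G x f m s (j + 1))).Nonempty := by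
      apply MeasureTheory.nonempty_of_measure_ne_zero (μ := μ)
      rw [hcylμ]
      exact pow_ne_zero _ (ENNReal.inv_ne_zero.mpr ENNReal.ofNat_ne_top)
    obtain ⟨ω, hω⟩ := hne
    have hω2 : ω ∈ cyl C ((m + j) + 1) (Fin.snoc (esc G x f m s j)
        (gcoin G x (f (m + j) (esc G x f m s j)))) := hω
    rw [cyl_snoc] at hω2
    have hpos1 : Pos (m + j) ω = f (m + j) (esc G x f m s j) :=
      hposcyl _ _ ω hω2.1
    have hcoin : C (m + j) ω = gcoin G x (Pos (m + j) ω) := by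
      rw [hpos1]; exact hω2.2
    have := hstep (m + j) ω (by rw [hpos1]; exact hnt) (by rw [hpos1]; exact hin) hcoin
    rw [hpos1] at this
    have hpos2 : Pos ((m + j) + 1) ω = f (m + (j + 1)) (esc G x f m s (j + 1)) :=
      hposcyl (m + (j + 1)) _ ω hω
    rw [hpos2] at this
    exact this
  -- descent: from a position in some `Tset`, reach a terminal position
  have hdescend : ∀ (i : ℕ) (m : ℕ) (s : Fin m → Bool) (j : ℕ),
      InT G x (f (m + j) (esc G x f m s j)) →
      midx G x (f (m + j) (esc G x f m s j)) ≤ i →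
      ∃ j', j ≤ j' ∧ j' ≤ j + i ∧
        G.terminal (f (m + j') (esc G x f m s j')) = true ∧
        ∀ k, j < k → k ≤ j' →
          f (m + k) (esc G x f m s k) ∈
            G.Tset x (midx G x (f (m + j) (esc G x f m s j)) - 1) := by
    intro i
    induction i with
    | zero =>
      intro m s j hin hle
      refine ⟨j, le_rfl, by omega, ?_, by omega⟩
      have h0 : midx G x (f (m + j) (esc G x f m s j)) = 0 := by omega
      have := midx_mem hin
      rw [h0] at this
      exact this
    | succ i ih =>
      intro m s j hin hle
      by_cases hterm : G.terminal (f (m + j) (esc G x f m s j)) = true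
      · exact ⟨j, le_rfl, by omega, hterm, by omega⟩
      · have hnt : G.terminal (f (m + j) (esc G x f m s j)) = false :=
          Bool.not_eq_true _ ▸ (by simpa using hterm)
        have h1 := midx_pos hin hnt
        have hstep1 := hqpstep m s j hnt hin
        have hin' : InT G x (f (m + (j + 1)) (esc G x f m s (j + 1))) := ⟨_, hstep1⟩
        have hle' : midx G x (f (m + (j + 1)) (esc G x f m s (j + 1))) ≤ i := by
          have := midx_le hstep1
          omega
        obtain ⟨j', hj1, hj2, hj3, hj4⟩ := ih m s (j + 1) hin' hle'
        refine ⟨j', by omega, by omega, hj3, ?_⟩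
        intro k hk1 hk2
        rcases Nat.eq_or_lt_of_le (Nat.succ_le_of_lt hk1) with hk | hk
        · rw [← hk]; exact hstep1
        · have := hj4 k (by omega) hk2
          refine Tset_mono G x ?_ this
          have := midx_le hstep1
          omega
  constructor
  · -- Part 1
    intro n p0 hp0 hpT
    obtain ⟨ω0⟩ := hΩ
    have hq0 : f (0 + 0) (esc G x f 0 (fun i => i.elim0) 0) = p0 := by
      have : Pos 0 ω0 = f 0 (fun i => C i ω0) := hf 0 ω0
      rw [hp0 ω0] at this
      have he : (fun i : Fin 0 => C i ω0) = (fun i : Fin 0 => i.elim0) :=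
        funext fun i => i.elim0
      rw [he] at this
      exact this.symm
    obtain ⟨j', hj1, hj2, hj3, _⟩ := hdescend n 0 (fun i => i.elim0) 0
      ⟨n, by rw [hq0]; exact hpT⟩ (by rw [hq0]; exact midx_le (by rw [hq0] at *; exact hpT))
    have hsubset : cyl C (0 + j') (esc G x f 0 (fun i => i.elim0) j') ⊆
        {ω | ∃ m ≤ n, G.terminal (Pos m ω) = true} := by
      intro ω hω
      refine ⟨0 + j', by omega, ?_⟩
      rw [hposcyl (0 + j') _ ω hω]
      exact hj3
    calc (2 : ENNReal)⁻¹ ^ n ≤ 2⁻¹ ^ (0 + j') := by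
          apply pow_le_pow_of_le_one zero_le (ENNReal.inv_le_one.mpr one_le_two) (by omega)
      _ = μ (cyl C (0 + j') (esc G x f 0 (fun i => i.elim0) j')) := (hcylμ _ _).symm
      _ ≤ μ {ω | ∃ m ≤ n, G.terminal (Pos m ω) = true} := measure_mono hsubset
  · -- Part 2
    have habs_ge : ∀ ω a, G.terminal (Pos a ω) = true → ∀ b, a ≤ b → Pos b ω = Pos a ω := by
      intro ω a ha b hb
      induction hb with
      | refl => rfl
      | @step b' hb' ih =>
        have ht' : G.terminal (Pos b' ω) = true := by rw [ih]; exact ha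
        rw [habs b' ω ht', ih]
    have hrest : ∀ m (s : Fin m → Bool) ω, ω ∈ cyl C m s → ∀ l (hl : l ≤ m),
        ω ∈ cyl C l (fun i' : Fin l => s ⟨i'.1, lt_of_lt_of_le i'.2 hl⟩) := by
      intro m s ω hω l hl i'
      exact hω ⟨i'.1, lt_of_lt_of_le i'.2 hl⟩
    have hper : ∀ p : P, p ∈ (⋃ i, G.Tset x i) → G.terminal p = false →
        μ {ω | {n : ℕ | Pos n ω = p}.Infinite} = 0 := by
      intro p hpU hpnt
      obtain ⟨ip, hip⟩ := Set.mem_iUnion.mp hpU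
      have hpin : InT G x p := ⟨ip, hip⟩
      have hi1 : 1 ≤ midx G x p := midx_pos hpin hpnt
      set i := midx G x p with hidef
      set q : ENNReal := 2⁻¹ ^ i with hqdef
      have hqne : q ≠ 0 := pow_ne_zero _ (ENNReal.inv_ne_zero.mpr ENNReal.ofNat_ne_top)
      have h2ne : (2 : ENNReal)⁻¹ ≠ ⊤ := ENNReal.inv_ne_top.mpr two_ne_zero
      -- agreement of counts on cylinders
      have hQagree : ∀ m (s : Fin m → Bool) ω, ω ∈ cyl C m s → ∀ l, l ≤ m →
          cnt (fun l' => Pos l' ω = p) l = cnt (Qs f p ⟨m, s⟩) l := by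
        intro m s ω hω l hl
        apply cnt_congr
        intro l' hl'
        have hl'm : l' < m := lt_of_lt_of_le hl' hl
        have hr := hrest m s ω hω l' (le_of_lt hl'm)
        have hp' : Pos l' ω =
            f l' (fun i' : Fin l' => s ⟨i'.1, lt_of_lt_of_le i'.2 (le_of_lt hl'm)⟩) :=
          hposcyl l' _ ω hr
        constructor
        · intro h; exact ⟨hl'm, by rw [← hp']; exact h⟩
        · rintro ⟨h, hfe⟩; rw [hp']; exact hfe
      -- decomposition of NkSet into cylinders
      have hNkE : ∀ k, NkSet Pos p k = ⋃ ms, EK C f p k ms := by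
        intro k
        ext ω
        constructor
        · rintro ⟨m, hvis, hcnt⟩
          refine Set.mem_iUnion.mpr ⟨⟨m, fun i' => C i' ω⟩, ?_⟩
          have hωc : ω ∈ cyl C m (fun i' => C i' ω) := fun i' => rfl
          have hfm : f m (fun i' => C i' ω) = p := by rw [← hf m ω]; exact hvis
          have hcnt' : cnt (Qs f p ⟨m, fun i' => C i' ω⟩) m = k := by
            rw [← hQagree m _ ω hωc m le_rfl]; exact hcnt
          rw [EK, if_pos ⟨hfm, hcnt'⟩]
          exact hωc
        · intro hω
          obtain ⟨ms, hms⟩ := Set.mem_iUnion.mp hω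
          rw [EK] at hms
          split at hms
          · rename_i hcond
            exact ⟨ms.1, by rw [hposcyl ms.1 ms.2 ω hms]; exact hcond.1,
              by rw [hQagree ms.1 ms.2 ω hms ms.1 le_rfl]; exact hcond.2⟩
          · exact absurd hms (Set.notMem_empty ω)
      have hEmeas : ∀ k ms, MeasurableSet (EK C f p k ms) := by
        intro k ms
        rw [EK]
        split
        · exact hcylmeas _ _
        · exact MeasurableSet.empty
      -- pairwise disjointness
      have hkeydisj : ∀ (k : ℕ) (a b : Σ m : ℕ, Fin m → Bool) (ω : Ω),
          ω ∈ cyl C a.1 a.2 → ω ∈ cyl C b.1 b.2 → condK f p k a → condK f p k b →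
          a.1 < b.1 → False := by
        intro k a b ω hωa hωb hca hcb hab
        have hva : Pos a.1 ω = p := by rw [hposcyl a.1 a.2 ω hωa]; exact hca.1
        have hc1 : cnt (fun l => Pos l ω = p) a.1 = k := by
          rw [hQagree a.1 a.2 ω hωa a.1 le_rfl]; exact hca.2
        have hc2 : cnt (fun l => Pos l ω = p) b.1 = k := by
          rw [hQagree b.1 b.2 ω hωb b.1 le_rfl]; exact hcb.2
        have := cnt_lt (fun l => Pos l ω = p) hva hab
        omega
      have hdisj : ∀ k, Pairwise (Function.onFun Disjoint (EK C f p k)) := by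
        intro k ms ms' hne
        rw [Function.onFun, Set.disjoint_left]
        intro ω hω hω'
        rw [EK] at hω hω'
        split at hω
        case isFalse => exact absurd hω (Set.notMem_empty ω)
        case isTrue hc =>
          split at hω'
          case isFalse => exact absurd hω' (Set.notMem_empty ω)
          case isTrue hc' =>
            rcases lt_trichotomy ms.1 ms'.1 with h | h | h
            · exact hkeydisj k ms ms' ω hω hω' hc hc' h
            · apply hne
              obtain ⟨m, s⟩ := ms
              obtain ⟨m', s'⟩ := ms'
              simp only at h
              subst h
              have : s = s' := funext fun i' => (hω i').symm.trans (hω' i')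
              rw [this]
            · exact hkeydisj k ms' ms ω hω' hω hc' hc h
      have hNkμ : ∀ k, μ (NkSet Pos p k) = ∑' ms, μ (EK C f p k ms) := by
        intro k
        rw [hNkE k]
        exact measure_iUnion (hdisj k) (hEmeas k)
      -- the key per-cylinder estimate
      have hkey : ∀ k ms,
          μ (NkSet Pos p (k + 1) ∩ EK C f p k ms) ≤ (1 - q) * μ (EK C f p k ms) := by
        intro k ms
        obtain ⟨m, s⟩ := ms
        by_cases hcond : condK f p k ⟨m, s⟩
        swap
        · rw [EK, if_neg hcond]
          simp
        rw [EK, if_pos hcond]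
        have hq0 : f (m + 0) (esc G x f m s 0) = p := hcond.1
        have hinq : InT G x (f (m + 0) (esc G x f m s 0)) := by rw [hq0]; exact hpin
        have hleq : midx G x (f (m + 0) (esc G x f m s 0)) ≤ i := by rw [hq0]
        obtain ⟨j', hj0, hji, hterm, hmidT⟩ := hdescend i m s 0 hinq hleq
        have hmidT' : ∀ k', 0 < k' → k' ≤ j' →
            f (m + k') (esc G x f m s k') ∈ G.Tset x (i - 1) := by
          intro k' h1' h2'
          have := hmidT k' h1' h2'
          rwa [hq0] at this
        have hEscsub : cyl C (m + j') (esc G x f m s j') ⊆ cyl C m s :=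
          hescsub m s 0 j' (by omega)
        have hpnot : p ∉ G.Tset x (i - 1) := not_mem_of_lt_midx (by omega)
        have hnovisit : ∀ ω ∈ cyl C (m + j') (esc G x f m s j'),
            ∀ l, m < l → Pos l ω ≠ p := by
          intro ω hω l hml
          by_cases hlj : l ≤ m + j'
          · obtain ⟨k', hk'⟩ : ∃ k', l = m + k' := ⟨l - m, by omega⟩
            have hk'1 : 0 < k' := by omega
            have hk'2 : k' ≤ j' := by omega
            have hsub := hescsub m s k' j' hk'2
            have hplω : Pos (m + k') ω = f (m + k') (esc G x f m s k') :=
              hposcyl _ _ ω (hsub hω)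
            intro heq
            rw [hk'] at heq
            rw [hplω] at heq
            exact hpnot (heq ▸ hmidT' k' hk'1 hk'2)
          · have hPj : Pos (m + j') ω = f (m + j') (esc G x f m s j') :=
              hposcyl _ _ ω hω
            have htermP : G.terminal (Pos (m + j') ω) = true := by rw [hPj]; exact hterm
            have := habs_ge ω (m + j') htermP l (by omega)
            intro heq
            rw [heq] at this
            rw [← this] at htermP
            rw [hpnt] at htermP
            exact Bool.false_ne_true htermP
        have hdisjEsc : Disjoint (NkSet Pos p (k + 1) ∩ cyl C m s)
            (cyl C (m + j') (esc G x f m s j')) := by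
          rw [Set.disjoint_left]
          rintro ω ⟨⟨m'', hvis, hcnt⟩, hωc⟩ hωE
          have hcntm : cnt (fun l => Pos l ω = p) m = k := by
            rw [hQagree m s ω hωc m le_rfl]; exact hcond.2
          have hm'' : m'' ≤ m := by
            by_contra h
            exact hnovisit ω hωE m'' (by omega) hvis
          have := cnt_mono (fun l => Pos l ω = p) hm''
          omega
        have hunion : μ (NkSet Pos p (k + 1) ∩ cyl C m s) +
            μ (cyl C (m + j') (esc G x f m s j')) ≤ μ (cyl C m s) := by
          rw [← measure_union hdisjEsc (hcylmeas _ _)]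
          exact measure_mono (Set.union_subset Set.inter_subset_right hEscsub)
        rw [hcylμ, hcylμ] at hunion
        have h1 : μ (NkSet Pos p (k + 1) ∩ cyl C m s) ≤ 2⁻¹ ^ m - 2⁻¹ ^ (m + j') :=
          ENNReal.le_sub_of_add_le_right (ENNReal.pow_ne_top h2ne) hunion
        calc μ (NkSet Pos p (k + 1) ∩ cyl C m s) ≤ 2⁻¹ ^ m - 2⁻¹ ^ (m + j') := h1
          _ ≤ 2⁻¹ ^ m - 2⁻¹ ^ (m + i) := by
              apply tsub_le_tsub_left
              exact pow_le_pow_of_le_one zero_le (ENNReal.inv_le_one.mpr one_le_two)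
                (by omega)
          _ = (1 - q) * 2⁻¹ ^ m := by
              rw [ENNReal.sub_mul (fun _ _ => ENNReal.pow_ne_top h2ne), one_mul, hqdef,
                ← pow_add, add_comm i m]
          _ = (1 - q) * μ (cyl C m s) := by rw [hcylμ]
      -- the recursion
      have hsubNk1 : ∀ k, NkSet Pos p (k + 1) ⊆ NkSet Pos p k := by
        intro k ω hω
        obtain ⟨m'', hvis, hcnt⟩ := hω
        have hlt : k < cnt (fun l => Pos l ω = p) m'' := by omega
        obtain ⟨m', _, hQ', hc'⟩ := exists_cnt_eq _ hlt
        exact ⟨m', hQ', hc'⟩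
      have hrec : ∀ k, μ (NkSet Pos p (k + 1)) ≤ (1 - q) * μ (NkSet Pos p k) := by
        intro k
        calc μ (NkSet Pos p (k + 1))
            = μ (⋃ ms, NkSet Pos p (k + 1) ∩ EK C f p k ms) := by
              rw [← Set.inter_iUnion, ← hNkE k, Set.inter_eq_left.mpr (hsubNk1 k)]
          _ ≤ ∑' ms, μ (NkSet Pos p (k + 1) ∩ EK C f p k ms) := measure_iUnion_le _
          _ ≤ ∑' ms, (1 - q) * μ (EK C f p k ms) := ENNReal.tsum_le_tsum (hkey k)
          _ = (1 - q) * ∑' ms, μ (EK C f p k ms) := ENNReal.tsum_mul_left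
          _ = (1 - q) * μ (NkSet Pos p k) := by rw [← hNkμ k]
      have hboundNk : ∀ k, μ (NkSet Pos p k) ≤ (1 - q) ^ k := by
        intro k
        induction k with
        | zero => simpa using prob_le_one
        | succ k ih =>
          calc μ (NkSet Pos p (k + 1)) ≤ (1 - q) * μ (NkSet Pos p k) := hrec k
            _ ≤ (1 - q) * (1 - q) ^ k := mul_le_mul_right ih _
            _ = (1 - q) ^ (k + 1) := by rw [pow_succ, mul_comm]
      have hInfSub : ∀ k, {ω | {n : ℕ | Pos n ω = p}.Infinite} ⊆ NkSet Pos p k := by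
        intro k ω hinf
        obtain ⟨t, hts, htc⟩ := Set.Infinite.exists_subset_card_eq hinf (k + 1)
        have hsubf : t ⊆ (Finset.range (t.sup id + 1)).filter (fun l => Pos l ω = p) := by
          intro a ha
          rw [Finset.mem_filter, Finset.mem_range]
          exact ⟨Nat.lt_succ_of_le (Finset.le_sup (f := id) ha), hts ha⟩
        have hlt : k < cnt (fun l => Pos l ω = p) (t.sup id + 1) := by
          have hcc := Finset.card_le_card hsubf
          rw [htc] at hcc
          classical
          have : ((Finset.range (t.sup id + 1)).filter (fun l => Pos l ω = p)).card =
              cnt (fun l => Pos l ω = p) (t.sup id + 1) := by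
            rw [cnt]
            congr 1
            exact (Finset.filter_congr_decidable _ _ _).trans
              (Finset.filter_congr_decidable _ _ _).symm
          omega
        obtain ⟨m', _, hQ', hc'⟩ := exists_cnt_eq _ hlt
        exact ⟨m', hQ', hc'⟩
      have hlim : Filter.Tendsto (fun k => (1 - q) ^ k) Filter.atTop (nhds 0) :=
        ENNReal.tendsto_pow_atTop_nhds_zero_of_lt_one
          (ENNReal.sub_lt_self (by simp) one_ne_zero hqne)
      have hub : ∀ k, μ {ω | {n : ℕ | Pos n ω = p}.Infinite} ≤ (1 - q) ^ k :=
        fun k => le_trans (measure_mono (hInfSub k)) (hboundNk k)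
      exact le_antisymm (ge_of_tendsto' hlim hub) zero_le
    -- conclude
    have hcover : {ω | ∃ p ∈ ⋃ i, G.Tset x i, G.terminal p = false ∧
        {n : ℕ | Pos n ω = p}.Infinite} ⊆
        ⋃ p : P, {ω | p ∈ (⋃ i, G.Tset x i) ∧ G.terminal p = false ∧
          {n : ℕ | Pos n ω = p}.Infinite} := by
      rintro ω ⟨p, hp1, hp2, hp3⟩
      exact Set.mem_iUnion.mpr ⟨p, hp1, hp2, hp3⟩
    refine measure_mono_null hcover (measure_iUnion_null fun p => ?_)
    by_cases h1 : p ∈ ⋃ i, G.Tset x i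
    · by_cases h2 : G.terminal p = false
      · refine measure_mono_null ?_ (hper p h1 h2)
        rintro ω ⟨_, _, h3⟩
        exact h3
      · have : {ω | p ∈ (⋃ i, G.Tset x i) ∧ G.terminal p = false ∧
            {n : ℕ | Pos n ω = p}.Infinite} = ∅ := by
          ext ω
          simp only [Set.mem_setOf_eq, Set.mem_empty_iff_false, iff_false]
          rintro ⟨_, h2', _⟩
          exact h2 h2'
        rw [this]
        exact measure_empty
    · have : {ω | p ∈ (⋃ i, G.Tset x i) ∧ G.terminal p = false ∧
          {n : ℕ | Pos n ω = p}.Infinite} = ∅ := by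
        ext ω
        simp only [Set.mem_setOf_eq, Set.mem_empty_iff_false, iff_false]
        rintro ⟨h1', _, _⟩
        exact h1 h1'
      rw [this]
      exact measure_empty
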